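/- arXiv:0709.4230 — 4 statements merged into one kernel-verified Lean document; each statement's English description precedes it below -/
import Mathlib

section
/- Let μ be a probability measure on a measurable space, M ≥ 1, and let f be measurable with 0 < f ≤ M almost everywhere and log f square-integrable. Set α = ∫ log f dμ and g = log f − α. Then for every β ∈ [0,1], the function β ↦ log ∫ e^{βg} dμ has derivative ∫ g e^{βg} dμ / ∫ e^{βg} dμ, and this derivative is bounded above by M ‖g‖₂ / ‖f‖₁, where ‖f‖₁ = ∫ |f| dμ and ‖g‖₂ = (∫ |g|² dμ)^{1/2}. In particular ∫ f^β dμ ≥ M^{β−1} ‖f‖₁ for all β ∈ [0,1]. -/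
noncomputable section
open MeasureTheory

private lemma aux_mul_le {b t c : ℝ} (hb0 : 0 ≤ b) (hb1 : b ≤ 1) (htc : t ≤ c) (hc : 0 ≤ c) :
    b * t ≤ c := by
  rcases le_or_gt t 0 with h | h
  · exact le_trans (mul_nonpos_of_nonneg_of_nonpos hb0 h) hc
  · calc b * t ≤ 1 * t := mul_le_mul_of_nonneg_right hb1 h.le
      _ = t := one_mul t
      _ ≤ c := htc

private lemma aux_exp_sub_exp (x y : ℝ) :
    |Real.exp x - Real.exp y| ≤ |x - y| * max (Real.exp x) (Real.exp y) := by
  have key : ∀ u v : ℝ, v ≤ u → Real.exp u - Real.exp v ≤ (u - v) * Real.exp u := by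
    intro u v huv
    have h1 : (v - u) + 1 ≤ Real.exp (v - u) := Real.add_one_le_exp _
    have h2 : Real.exp v = Real.exp u * Real.exp (v - u) := by
      rw [← Real.exp_add]; ring_nf
    nlinarith [Real.exp_pos u, Real.exp_pos v]
  rcases le_total y x with h | h
  · have h0 : 0 ≤ Real.exp x - Real.exp y := sub_nonneg.mpr (Real.exp_le_exp.mpr h)
    rw [abs_of_nonneg h0, abs_of_nonneg (sub_nonneg.mpr h)]
    calc Real.exp x - Real.exp y ≤ (x - y) * Real.exp x := key x y h
      _ ≤ (x - y) * max (Real.exp x) (Real.exp y) :=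
        mul_le_mul_of_nonneg_left (le_max_left _ _) (sub_nonneg.mpr h)
  · have h0 : Real.exp x - Real.exp y ≤ 0 := sub_nonpos.mpr (Real.exp_le_exp.mpr h)
    rw [abs_of_nonpos h0, abs_of_nonpos (sub_nonpos.mpr h), neg_sub, neg_sub]
    calc Real.exp y - Real.exp x ≤ (y - x) * Real.exp y := key y x h
      _ ≤ (y - x) * max (Real.exp x) (Real.exp y) :=
        mul_le_mul_of_nonneg_left (le_max_right _ _) (sub_nonneg.mpr h)

/-- For a probability measure `μ` and `0 < f ≤ M` a.e. (`M ≥ 1`) with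
`log f ∈ L²(μ)`, with `α = ∫ log f dμ` and `g = log f − α`: for every `β ∈ [0,1]` the
function `β ↦ log ∫ e^{βg} dμ` has derivative `∫ g e^{βg} dμ / ∫ e^{βg} dμ` (within `[0,1]`),
this derivative is at most `M ‖g‖₂ / ‖f‖₁`, and `∫ f^β dμ ≥ M^{β−1} ‖f‖₁`. -/
theorem stmt12 {Ω : Type*} [MeasurableSpace Ω] (μ : Measure Ω) [IsProbabilityMeasure μ]
    (f : Ω → ℝ) (M : ℝ) (hM : 1 ≤ M)
    (hmeas : Measurable f)
    (hpos : ∀ᵐ x ∂μ, 0 < f x) (hle : ∀ᵐ x ∂μ, f x ≤ M)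
    (hL2 : MemLp (fun x => Real.log (f x)) 2 μ)
    (g : Ω → ℝ) (hg : g = fun x => Real.log (f x) - ∫ y, Real.log (f y) ∂μ) :
    ∀ β ∈ Set.Icc (0:ℝ) 1,
      HasDerivWithinAt (fun b : ℝ => Real.log (∫ x, Real.exp (b * g x) ∂μ))
        ((∫ x, g x * Real.exp (β * g x) ∂μ) / (∫ x, Real.exp (β * g x) ∂μ))
        (Set.Icc 0 1) β
      ∧ (∫ x, g x * Real.exp (β * g x) ∂μ) / (∫ x, Real.exp (β * g x) ∂μ)
          ≤ M * (∫ x, |g x| ^ 2 ∂μ) ^ (1/2 : ℝ) / (∫ x, |f x| ∂μ)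
      ∧ M ^ (β - 1) * (∫ x, |f x| ∂μ) ≤ ∫ x, f x ^ β ∂μ := by
  intro β hβ
  obtain ⟨hβ0, hβ1⟩ := hβ
  set α : ℝ := ∫ y, Real.log (f y) ∂μ with hα
  have hM0 : (0:ℝ) < M := lt_of_lt_of_le one_pos hM
  have hgmeas : Measurable g := by rw [hg]; exact hmeas.log.sub measurable_const
  have hgL2 : MemLp g 2 μ := by rw [hg]; exact hL2.sub (memLp_const _)
  have hgL1 : Integrable g μ := hgL2.integrable (by norm_num)
  set C : ℝ := Real.exp (Real.log M + max 0 (-α)) with hC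
  -- pointwise bound on exp (b * g x)
  have hptC : ∀ x, 0 < f x → f x ≤ M → ∀ b : ℝ, 0 ≤ b → b ≤ 1 →
      Real.exp (b * g x) ≤ C := by
    intro x hx1 hx2 b hb0 hb1
    rw [hC]
    apply Real.exp_le_exp.mpr
    have hge : b * g x = b * Real.log (f x) + b * (-α) := by rw [hg]; ring
    rw [hge]
    have h1 : b * Real.log (f x) ≤ Real.log M :=
      aux_mul_le hb0 hb1 (Real.log_le_log hx1 hx2) (Real.log_nonneg hM)
    have h2 : b * (-α) ≤ max 0 (-α) := aux_mul_le hb0 hb1 (le_max_right _ _) (le_max_left _ _)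
    linarith
  have haeC : ∀ b : ℝ, 0 ≤ b → b ≤ 1 → ∀ᵐ x ∂μ, Real.exp (b * g x) ≤ C := by
    intro b hb0 hb1
    filter_upwards [hpos, hle] with x hx1 hx2 using hptC x hx1 hx2 b hb0 hb1
  -- integrabilities
  have hint_exp : ∀ b : ℝ, 0 ≤ b → b ≤ 1 → Integrable (fun x => Real.exp (b * g x)) μ := by
    intro b hb0 hb1
    refine Integrable.mono' (integrable_const C)
      ((hgmeas.const_mul b).exp.aestronglyMeasurable) ?_
    filter_upwards [haeC b hb0 hb1] with x hx
    rwa [Real.norm_eq_abs, abs_of_pos (Real.exp_pos _)]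
  have hint_gexp : ∀ b : ℝ, 0 ≤ b → b ≤ 1 →
      Integrable (fun x => g x * Real.exp (b * g x)) μ := by
    intro b hb0 hb1
    refine Integrable.mono' (hgL1.abs.const_mul C)
      (hgmeas.mul (hgmeas.const_mul b).exp).aestronglyMeasurable ?_
    filter_upwards [haeC b hb0 hb1] with x hx
    rw [Real.norm_eq_abs, abs_mul, abs_of_pos (Real.exp_pos _)]
    calc |g x| * Real.exp (b * g x) ≤ |g x| * C :=
          mul_le_mul_of_nonneg_left hx (abs_nonneg _)
      _ = C * |g x| := mul_comm _ _
  -- positivity of denominator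
  have hFpos : ∀ b : ℝ, 0 ≤ b → b ≤ 1 → 0 < ∫ x, Real.exp (b * g x) ∂μ := by
    intro b hb0 hb1
    rw [integral_pos_iff_support_of_nonneg_ae
      (Filter.Eventually.of_forall fun x => (Real.exp_pos _).le) (hint_exp b hb0 hb1)]
    have hsupp : Function.support (fun x => Real.exp (b * g x)) = Set.univ :=
      Set.eq_univ_of_forall fun x => (Real.exp_pos _).ne'
    rw [hsupp, measure_univ]
    norm_num
  -- Part 1: derivative of F
  have hF : HasDerivWithinAt (fun b : ℝ => ∫ x, Real.exp (b * g x) ∂μ)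
      (∫ x, g x * Real.exp (β * g x) ∂μ) (Set.Icc 0 1) β := by
    rw [hasDerivWithinAt_iff_tendsto_slope]
    have key : Filter.Tendsto
        (fun b => ∫ x, slope (fun t => Real.exp (t * g x)) β b ∂μ)
        (nhdsWithin β (Set.Icc (0:ℝ) 1 \ {β}))
        (nhds (∫ x, g x * Real.exp (β * g x) ∂μ)) := by
      apply tendsto_integral_filter_of_dominated_convergence (fun x => C * |g x|)
      · apply Filter.Eventually.of_forall
        intro b
        simp only [slope_def_field]
        exact (((hgmeas.const_mul b).exp.sub
          (hgmeas.const_mul β).exp).div_const _).aestronglyMeasurable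
      · filter_upwards [eventually_mem_nhdsWithin] with b hb
        obtain ⟨⟨hb0, hb1⟩, hbne⟩ := hb
        have hbne' : b ≠ β := hbne
        filter_upwards [hpos, hle] with x hx1 hx2
        rw [slope_def_field, Real.norm_eq_abs, abs_div]
        have hd : (0:ℝ) < |b - β| := abs_pos.mpr (sub_ne_zero.mpr hbne')
        rw [div_le_iff₀ hd]
        have h1 : |Real.exp (b * g x) - Real.exp (β * g x)| ≤
            |b * g x - β * g x| * max (Real.exp (b * g x)) (Real.exp (β * g x)) :=
          aux_exp_sub_exp _ _
        have hmax : max (Real.exp (b * g x)) (Real.exp (β * g x)) ≤ C :=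
          max_le (hptC x hx1 hx2 b hb0 hb1) (hptC x hx1 hx2 β hβ0 hβ1)
        have h2 : |b * g x - β * g x| = |b - β| * |g x| := by
          rw [← sub_mul, abs_mul]
        calc |Real.exp (b * g x) - Real.exp (β * g x)|
            ≤ (|b - β| * |g x|) * max (Real.exp (b * g x)) (Real.exp (β * g x)) := by
              rw [← h2]; exact h1
          _ ≤ (|b - β| * |g x|) * C := by
              apply mul_le_mul_of_nonneg_left hmax
              positivity
          _ = C * |g x| * |b - β| := by ring
      · exact hgL1.abs.const_mul C
      · apply Filter.Eventually.of_forall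
        intro x
        have hd : HasDerivAt (fun t : ℝ => Real.exp (t * g x))
            (g x * Real.exp (β * g x)) β := by
          simpa [mul_comm] using (hasDerivAt_mul_const (g x)).exp (x := β)
        exact hasDerivWithinAt_iff_tendsto_slope.mp (hd.hasDerivWithinAt (s := Set.Icc 0 1))
    refine key.congr' ?_
    filter_upwards [eventually_mem_nhdsWithin] with b hb
    obtain ⟨⟨hb0, hb1⟩, hbne⟩ := hb
    simp only [slope_def_field]
    rw [integral_div, integral_sub (hint_exp b hb0 hb1) (hint_exp β hβ0 hβ1)]
  have part1 : HasDerivWithinAt (fun b : ℝ => Real.log (∫ x, Real.exp (b * g x) ∂μ))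
      ((∫ x, g x * Real.exp (β * g x) ∂μ) / (∫ x, Real.exp (β * g x) ∂μ))
      (Set.Icc 0 1) β := hF.log (hFpos β hβ0 hβ1).ne'
  -- integrability of f
  have hfint : Integrable f μ := by
    refine Integrable.mono' (integrable_const M) hmeas.aestronglyMeasurable ?_
    filter_upwards [hpos, hle] with x hx1 hx2
    rwa [Real.norm_eq_abs, abs_of_pos hx1]
  have hfabs : (∫ x, |f x| ∂μ) = ∫ x, f x ∂μ := by
    apply integral_congr_ae
    filter_upwards [hpos] with x hx using abs_of_pos hx
  have hfpos : 0 < ∫ x, f x ∂μ := by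
    rw [integral_pos_iff_support_of_nonneg_ae ?nn hfint]
    case nn => filter_upwards [hpos] with x hx using hx.le
    by_contra hcon
    push_neg at hcon
    have h0 : μ (Function.support f) = 0 := le_antisymm hcon zero_le
    have h1 : μ (Function.support f)ᶜ = 0 := by
      apply measure_mono_null _ (ae_iff.mp hpos)
      intro x hx
      simp only [Set.mem_compl_iff, Function.mem_support, not_not] at hx
      simp [hx]
    have := measure_union_le (μ := μ) (Function.support f) (Function.support f)ᶜ
    rw [Set.union_compl_self, measure_univ, h0, h1] at this
    simp at this
  -- pointwise rpow facts
  have hpt_eq : ∀ x, 0 < f x → Real.exp (β * g x) = f x ^ β * Real.exp (-(β * α)) := by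
    intro x hx
    rw [hg]
    simp only
    rw [mul_sub, Real.rpow_def_of_pos hx, ← Real.exp_add]
    ring_nf
  have hpt3 : ∀ x, 0 < f x → f x ≤ M → M ^ (β - 1) * f x ≤ f x ^ β := by
    intro x hx1 hx2
    calc M ^ (β - 1) * f x ≤ f x ^ (β - 1) * f x :=
        mul_le_mul_of_nonneg_right
          (Real.rpow_le_rpow_of_nonpos hx1 hx2 (by linarith)) hx1.le
      _ = f x ^ β := by rw [← Real.rpow_add_one hx1.ne', sub_add_cancel]
  -- Part 3
  have hrpow_ae : (fun x => Real.exp (β * Real.log (f x))) =ᵐ[μ] fun x => f x ^ β := by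
    filter_upwards [hpos] with x hx
    rw [Real.rpow_def_of_pos hx, mul_comm]
  have hint_rpow : Integrable (fun x => f x ^ β) μ := by
    refine Integrable.congr ?_ hrpow_ae
    refine Integrable.mono' (integrable_const (M ^ β))
      ((hmeas.log.const_mul β).exp.aestronglyMeasurable) ?_
    filter_upwards [hpos, hle] with x hx1 hx2
    rw [Real.norm_eq_abs, abs_of_pos (Real.exp_pos _)]
    have heq : Real.exp (β * Real.log (f x)) = f x ^ β := by
      rw [Real.rpow_def_of_pos hx1, mul_comm]
    rw [heq]
    exact Real.rpow_le_rpow hx1.le hx2 hβ0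
  have part3 : M ^ (β - 1) * (∫ x, |f x| ∂μ) ≤ ∫ x, f x ^ β ∂μ := by
    rw [hfabs, ← integral_const_mul]
    apply integral_mono_ae (hfint.const_mul _) hint_rpow
    filter_upwards [hpos, hle] with x hx1 hx2 using hpt3 x hx1 hx2
  -- the L1-L2 bound : ∫ |g| ≤ S
  set S : ℝ := (∫ x, |g x| ^ 2 ∂μ) ^ (1/2 : ℝ) with hS
  have hJ0 : 0 ≤ ∫ x, |g x| ^ 2 ∂μ := by
    apply integral_nonneg; intro x; positivity
  have hS0 : 0 ≤ S := Real.rpow_nonneg hJ0 _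
  set I : ℝ := ∫ x, |g x| ∂μ with hI
  have hI0 : 0 ≤ I := by
    apply integral_nonneg; intro x; exact abs_nonneg _
  have hgabsL2 : MemLp (fun x => |g x|) 2 μ := by
    simpa [Real.norm_eq_abs] using hgL2.norm
  have hg_sq_int : Integrable (fun x => |g x| ^ 2) μ := hgabsL2.integrable_sq
  have hgabs : I ≤ S := by
    have hsub : MemLp (fun x => |g x| - I) 2 μ := hgabsL2.sub (memLp_const _)
    have hsq : Integrable (fun x => (|g x| - I) ^ 2) μ := hsub.integrable_sq
    have hexpand : (∫ x, (|g x| - I) ^ 2 ∂μ) = (∫ x, |g x| ^ 2 ∂μ) - I ^ 2 := by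
      have hptw : ∀ x, (|g x| - I) ^ 2 = |g x| ^ 2 - 2 * I * |g x| + I ^ 2 := by
        intro x; ring
      rw [integral_congr_ae (Filter.Eventually.of_forall hptw), integral_add, integral_sub,
        integral_const, integral_const_mul]
      · simp [hI]; ring
      · exact hg_sq_int
      · exact (hgL1.abs.const_mul _)
      · exact hg_sq_int.sub (hgL1.abs.const_mul _)
      · exact integrable_const _
    have hnn : 0 ≤ (∫ x, (|g x| - I) ^ 2 ∂μ) := by
      apply integral_nonneg; intro x; positivity
    have hIJ : I ^ 2 ≤ ∫ x, |g x| ^ 2 ∂μ := by linarith [hexpand ▸ hnn]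
    rw [hS, ← Real.sqrt_eq_rpow]
    exact (Real.le_sqrt hI0 hJ0).mpr hIJ
  -- Part 2
  set N : ℝ := ∫ x, g x * Real.exp (β * g x) ∂μ with hN
  set D : ℝ := ∫ x, Real.exp (β * g x) ∂μ with hD
  set E : ℝ := Real.exp (-(β * α)) with hE
  have hE0 : 0 < E := Real.exp_pos _
  have hNle : N ≤ M ^ β * E * S := by
    have habs_int : Integrable (fun x => |g x| * Real.exp (β * g x)) μ := by
      have h := (hint_gexp β hβ0 hβ1).abs
      have hpt : ∀ x : Ω, |g x * Real.exp (β * g x)| = |g x| * Real.exp (β * g x) := by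
        intro x; rw [abs_mul, abs_of_pos (Real.exp_pos _)]
      exact h.congr (Filter.Eventually.of_forall hpt)
    have h1 : N ≤ ∫ x, |g x| * Real.exp (β * g x) ∂μ := by
      apply integral_mono_ae (hint_gexp β hβ0 hβ1) habs_int
      apply Filter.Eventually.of_forall
      intro x
      exact mul_le_mul_of_nonneg_right (le_abs_self _) (Real.exp_pos _).le
    have h2 : (∫ x, |g x| * Real.exp (β * g x) ∂μ) ≤ ∫ x, |g x| * (M ^ β * E) ∂μ := by
      apply integral_mono_ae habs_int (hgL1.abs.mul_const _)
      filter_upwards [hpos, hle] with x hx1 hx2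
      apply mul_le_mul_of_nonneg_left _ (abs_nonneg _)
      rw [hpt_eq x hx1]
      exact mul_le_mul_of_nonneg_right (Real.rpow_le_rpow hx1.le hx2 hβ0) hE0.le
    have h3 : (∫ x, |g x| * (M ^ β * E) ∂μ) = (M ^ β * E) * I := by
      rw [integral_mul_const, hI, mul_comm]
    calc N ≤ ∫ x, |g x| * (M ^ β * E) ∂μ := h1.trans h2
      _ = (M ^ β * E) * I := h3
      _ ≤ (M ^ β * E) * S := by
          apply mul_le_mul_of_nonneg_left hgabs
          positivity
      _ = M ^ β * E * S := by ring
  have hDge : M ^ (β - 1) * E * (∫ x, f x ∂μ) ≤ D := by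
    rw [mul_assoc, ← integral_const_mul, ← integral_const_mul]
    apply integral_mono_ae ((hfint.const_mul E).const_mul _) (hint_exp β hβ0 hβ1)
    filter_upwards [hpos, hle] with x hx1 hx2
    rw [hpt_eq x hx1]
    calc M ^ (β - 1) * (E * f x) = (M ^ (β - 1) * f x) * E := by ring
      _ ≤ f x ^ β * E := mul_le_mul_of_nonneg_right (hpt3 x hx1 hx2) hE0.le
  have hB0 : 0 < M ^ (β - 1) * E * (∫ x, f x ∂μ) := by
    have := Real.rpow_pos_of_pos hM0 (β - 1)
    positivity
  have part2 : N / D ≤ M * S / (∫ x, |f x| ∂μ) := by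
    have hstep : N / D ≤ (M ^ β * E * S) / (M ^ (β - 1) * E * (∫ x, f x ∂μ)) := by
      apply div_le_div₀ _ hNle hB0 hDge
      positivity
    have heq : (M ^ β * E * S) / (M ^ (β - 1) * E * (∫ x, f x ∂μ))
        = M * S / (∫ x, |f x| ∂μ) := by
      rw [hfabs]
      have hMsplit : M ^ β = M ^ (β - 1) * M := by
        rw [← Real.rpow_add_one hM0.ne' (β - 1), sub_add_cancel]
      rw [hMsplit]
      rw [div_eq_div_iff hB0.ne' hfpos.ne']
      ring
    exact heq ▸ hstep
  exact ⟨part1, part2, part3⟩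
end
end

section
/- Let 1 < β < 5/3 and c > 0, and let p : B₁ × (−1,0) → ℝ be measurable with ∫_{B₁} |x|^{−β} |p(x,t)|² dx ≤ c + c|t|^{−(1+β)/2} for almost every t ∈ (−1,0). Then there is a constant C depending only on c and β such that ∫_{−1}^0 ∫_{B₁} |p(x,t)|^{3/2} dx dt ≤ C. -/
noncomputable section
open MeasureTheory Set
open scoped ENNReal

abbrev E3 : Type := EuclideanSpace ℝ (Fin 3)

lemma aux_int (δ : ℝ) (h1 : δ < 1) :
    IntegrableOn (fun t : ℝ => |t| ^ (-δ)) (Ioo (-1) 0) := by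
  have h : IntegrableOn (fun x : ℝ => x ^ (-δ)) (Ioo 0 1) :=
    (intervalIntegral.integrableOn_Ioo_rpow_iff one_pos).mpr (by linarith)
  have h2 := (MeasurePreserving.integrableOn_comp_preimage (Measure.measurePreserving_neg _)
      (Homeomorph.neg ℝ).measurableEmbedding).2 h
  have hpre : Neg.neg ⁻¹' (Ioo (0:ℝ) 1) = Ioo (-1) 0 := by
    ext x; constructor <;> intro hx <;> simp_all <;> constructor <;> linarith [hx.1, hx.2]
  rw [hpre] at h2
  refine h2.congr_fun (fun x hx => ?_) measurableSet_Ioo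
  simp only [Function.comp]
  rw [abs_of_neg hx.2]

/-- A weighted bound `∫_{B₁} |x|^{−β} p(x,t)² dx ≤ c + c|t|^{−(1+β)/2}`
for a.e. `t ∈ (−1,0)`, with `1 < β < 5/3`, implies `p ∈ L^{3/2}(B₁ × (−1,0))`. -/
theorem stmt17 (β c : ℝ) (hβ1 : 1 < β) (hβ2 : β < 5/3) (hc : 0 < c) :
    ∃ C : ℝ, 0 < C ∧ ∀ p : E3 → ℝ → ℝ,
      Measurable (fun q : E3 × ℝ => p q.1 q.2) →
      (∀ᵐ t ∂(volume.restrict (Ioo (-1:ℝ) 0)),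
        (∫⁻ x in Metric.ball (0:E3) 1, ENNReal.ofReal (‖x‖ ^ (-β) * p x t ^ 2))
          ≤ ENNReal.ofReal (c + c * |t| ^ (-(1 + β) / 2))) →
      (∫⁻ t in Ioo (-1:ℝ) 0, ∫⁻ x in Metric.ball (0:E3) 1,
          ENNReal.ofReal (|p x t| ^ (3/2 : ℝ)))
        ≤ ENNReal.ofReal C := by
  set γ : ℝ := (1 + β) / 2 with hγ
  set δ : ℝ := γ * (3/4) with hδ
  have hδ1 : δ < 1 := by rw [hδ, hγ]; nlinarith
  have hδ0 : 0 < δ := by rw [hδ, hγ]; nlinarith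
  set vB : ℝ≥0∞ := volume (Metric.ball (0:E3) 1) with hvB
  have hvBfin : vB ≠ ⊤ := measure_ball_lt_top.ne
  set M : ℝ≥0∞ :=
    (∫⁻ t in Ioo (-1:ℝ) 0, ENNReal.ofReal ((2*c) ^ (3/4:ℝ) * |t| ^ (-δ)))
      * vB ^ (1/4:ℝ) with hM
  have hMfin : M ≠ ⊤ := by
    apply ENNReal.mul_ne_top
    · have : Integrable (fun t : ℝ => (2*c) ^ (3/4:ℝ) * |t| ^ (-δ))
          (volume.restrict (Ioo (-1:ℝ) 0)) := (aux_int δ hδ1).const_mul _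
      exact this.lintegral_lt_top.ne
    · exact ENNReal.rpow_ne_top_of_nonneg (by norm_num) hvBfin
  refine ⟨M.toReal + 1, by positivity, fun p hp hbound => ?_⟩
  have hle : ∀ᵐ t ∂(volume.restrict (Ioo (-1:ℝ) 0)),
      (∫⁻ x in Metric.ball (0:E3) 1, ENNReal.ofReal (|p x t| ^ (3/2 : ℝ)))
        ≤ ENNReal.ofReal ((2*c) ^ (3/4:ℝ) * |t| ^ (-δ)) * vB ^ (1/4:ℝ) := by
    filter_upwards [hbound, ae_restrict_mem measurableSet_Ioo] with t ht htmem
    have hpt : Measurable (fun x : E3 => p x t) :=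
      hp.comp (measurable_id.prodMk measurable_const)
    set f : E3 → ℝ≥0∞ := fun x => (ENNReal.ofReal (‖x‖ ^ (-β) * p x t ^ 2)) ^ (3/4:ℝ) with hf
    set g : E3 → ℝ≥0∞ := fun x => (ENNReal.ofReal (‖x‖ ^ β)) ^ (3/4:ℝ) with hg
    have hfm : Measurable f :=
      (ENNReal.measurable_ofReal.comp
        ((measurable_norm.pow measurable_const).mul (hpt.pow_const 2))).pow measurable_const
    have hgm : Measurable g :=
      (ENNReal.measurable_ofReal.comp (measurable_norm.pow measurable_const)).pow
        measurable_const
    -- a.e. pointwise identity on the ball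
    have key : ∀ᵐ x ∂(volume.restrict (Metric.ball (0:E3) 1)),
        ENNReal.ofReal (|p x t| ^ (3/2 : ℝ)) = (f * g) x := by
      have h0 : ∀ᵐ x ∂(volume.restrict (Metric.ball (0:E3) 1)), x ≠ (0:E3) := by
        refine (ae_restrict_iff' (by measurability)).2 ?_
        have : volume ({(0:E3)}) = 0 := measure_singleton 0
        filter_upwards [measure_eq_zero_iff_ae_notMem.1 this] with x hx _
        simpa using hx
      filter_upwards [h0] with x hx
      have hnx : 0 < ‖x‖ := norm_pos_iff.2 hx
      have h1 : (0:ℝ) ≤ ‖x‖ ^ (-β) * p x t ^ 2 := by positivity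
      have h2 : (0:ℝ) ≤ ‖x‖ ^ β := by positivity
      simp only [Pi.mul_apply, hf, hg]
      rw [ENNReal.ofReal_rpow_of_nonneg h1 (by norm_num),
        ENNReal.ofReal_rpow_of_nonneg h2 (by norm_num),
        ← ENNReal.ofReal_mul (by positivity),
        ← Real.mul_rpow h1 h2]
      congr 1
      rw [mul_assoc, mul_comm (p x t ^ 2), ← mul_assoc,
        ← Real.rpow_add hnx]
      simp only [neg_add_cancel, Real.rpow_zero, one_mul]
      have h2' : p x t ^ 2 = |p x t| ^ (2:ℝ) := by
        rw [Real.rpow_two, sq_abs]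
      rw [h2', ← Real.rpow_mul (abs_nonneg _)]
      norm_num
    calc (∫⁻ x in Metric.ball (0:E3) 1, ENNReal.ofReal (|p x t| ^ (3/2 : ℝ)))
        = ∫⁻ x in Metric.ball (0:E3) 1, (f * g) x := lintegral_congr_ae key
      _ ≤ (∫⁻ x in Metric.ball (0:E3) 1, f x ^ (4/3:ℝ)) ^ (1/(4/3:ℝ))
            * (∫⁻ x in Metric.ball (0:E3) 1, g x ^ (4:ℝ)) ^ (1/(4:ℝ)) :=
          ENNReal.lintegral_mul_le_Lp_mul_Lq _ ⟨by norm_num, by norm_num, by norm_num⟩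
            hfm.aemeasurable hgm.aemeasurable
      _ ≤ ENNReal.ofReal ((2*c) ^ (3/4:ℝ) * |t| ^ (-δ)) * vB ^ (1/4:ℝ) := by
          gcongr
          · -- f part
            have hfe : ∀ x : E3, f x ^ (4/3:ℝ)
                = ENNReal.ofReal (‖x‖ ^ (-β) * p x t ^ 2) := by
              intro x
              rw [hf, ← ENNReal.rpow_mul]
              norm_num
            have h34 : (1/(4/3:ℝ)) = (3/4:ℝ) := by norm_num
            rw [h34]
            simp only [hfe]
            calc (∫⁻ x in Metric.ball (0:E3) 1,
                    ENNReal.ofReal (‖x‖ ^ (-β) * p x t ^ 2)) ^ (3/4:ℝ)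
                ≤ (ENNReal.ofReal (c + c * |t| ^ (-γ))) ^ (3/4:ℝ) := by
                  rw [show -(1+β)/2 = -γ by rw [hγ]; ring] at ht
                  exact ENNReal.rpow_le_rpow ht (by norm_num)
              _ ≤ ENNReal.ofReal ((2*c) ^ (3/4:ℝ) * |t| ^ (-δ)) := by
                  have htabs : 0 < |t| := abs_pos.2 (ne_of_lt htmem.2)
                  have htabs1 : |t| ≤ 1 := by
                    rw [abs_of_neg htmem.2]; linarith [htmem.1]
                  have h1le : (1:ℝ) ≤ |t| ^ (-γ) := by
                    have := Real.rpow_le_rpow_of_exponent_ge htabs htabs1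
                      (show -γ ≤ (0:ℝ) by rw [hγ]; linarith)
                    simpa using this
                  have hcle : c + c * |t| ^ (-γ) ≤ (2*c) * |t| ^ (-γ) := by nlinarith
                  calc (ENNReal.ofReal (c + c * |t| ^ (-γ))) ^ (3/4:ℝ)
                      ≤ (ENNReal.ofReal ((2*c) * |t| ^ (-γ))) ^ (3/4:ℝ) :=
                        ENNReal.rpow_le_rpow (ENNReal.ofReal_le_ofReal hcle) (by norm_num)
                    _ = ENNReal.ofReal ((2*c) ^ (3/4:ℝ) * |t| ^ (-δ)) := by
                        rw [ENNReal.ofReal_rpow_of_nonneg (by positivity) (by norm_num)]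
                        congr 1
                        rw [Real.mul_rpow (by positivity) (by positivity),
                          ← Real.rpow_mul (abs_nonneg t)]
                        congr 1
                        rw [hδ]; ring
          · -- g part
            have hg1 : ∀ x ∈ Metric.ball (0:E3) 1, g x ^ (4:ℝ) ≤ 1 := by
              intro x hx
              have hx1 : ‖x‖ < 1 := by simpa using hx
              have : ‖x‖ ^ β ≤ 1 :=
                Real.rpow_le_one (norm_nonneg x) hx1.le (by positivity)
              calc g x ^ (4:ℝ) = (ENNReal.ofReal (‖x‖ ^ β)) ^ ((3/4:ℝ)*4) := by
                    rw [hg, ← ENNReal.rpow_mul]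
                _ ≤ (1:ℝ≥0∞) ^ ((3/4:ℝ)*4) :=
                    ENNReal.rpow_le_rpow (ENNReal.ofReal_le_one.2 this) (by norm_num)
                _ = 1 := ENNReal.one_rpow _
            have hle1 : (∫⁻ x in Metric.ball (0:E3) 1, g x ^ (4:ℝ)) ≤ vB := by
              calc (∫⁻ x in Metric.ball (0:E3) 1, g x ^ (4:ℝ))
                  ≤ ∫⁻ _ in Metric.ball (0:E3) 1, (1:ℝ≥0∞) :=
                    setLIntegral_mono' measurableSet_ball hg1
                _ = vB := by rw [setLIntegral_one]
            exact hle1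
  calc (∫⁻ t in Ioo (-1:ℝ) 0, ∫⁻ x in Metric.ball (0:E3) 1,
          ENNReal.ofReal (|p x t| ^ (3/2 : ℝ)))
      ≤ ∫⁻ t in Ioo (-1:ℝ) 0,
          ENNReal.ofReal ((2*c) ^ (3/4:ℝ) * |t| ^ (-δ)) * vB ^ (1/4:ℝ) :=
        lintegral_mono_ae hle
    _ = M := by
        rw [hM, lintegral_mul_const]
        exact ENNReal.measurable_ofReal.comp
          (measurable_const.mul (measurable_abs.pow measurable_const))
    _ = ENNReal.ofReal M.toReal := (ENNReal.ofReal_toReal hMfin).symm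
    _ ≤ ENNReal.ofReal (M.toReal + 1) :=
        ENNReal.ofReal_le_ofReal (by linarith [ENNReal.toReal_nonneg (a := M)])
end
end

section
/- Let S < T, X₃ ∈ ℝ, and constants C₀, c₀, C₁ > 0. Let P : ℝ³ → [0, ∞) be measurable with ∫_{ℝ³} P(Y) dY = 1 and P(Y) ≤ C₀ (T−S)^{−3/2} exp(−c₀ |X₃ − Y₃| / (T−S)) for all Y = (Y₁,Y₂,Y₃), and let f : ℝ³ → ℝ be measurable with |f(Y)| ≤ C₁ (1 + R_Y)^{−1}, where R_Y = √(Y₁²+Y₂²). Then there is a constant C depending only on C₀, c₀, C₁ such that ∫_{ℝ³} P(Y) |f(Y)| dY ≤ C (T−S)^{−1/6}. -/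
noncomputable section
open MeasureTheory Set

/-- distance to the x₃-axis. -/
def rr (x : E3) : ℝ := Real.sqrt (x 0 ^ 2 + x 1 ^ 2)

open scoped ENNReal
open ProbabilityTheory in
lemma lint_exp_abs' {a : ℝ} (ha : 0 < a) (c : ℝ) :
    ∫⁻ x : ℝ, ENNReal.ofReal (Real.exp (-(a * |c - x|))) ≤ ENNReal.ofReal (2 / a) := by
  have hm : Measurable fun x : ℝ => ENNReal.ofReal (Real.exp (-(a * |x|))) := by fun_prop
  rw [(Measure.measurePreserving_sub_left volume c).lintegral_comp hm]
  have hpt : ∀ x : ℝ, ENNReal.ofReal (Real.exp (-(a * |x|)))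
      ≤ ENNReal.ofReal a⁻¹ * (exponentialPDF a x + exponentialPDF a (-x)) := by
    intro x
    rcases le_or_gt 0 x with hx | hx
    · rw [abs_of_nonneg hx]
      calc ENNReal.ofReal (Real.exp (-(a * x)))
          = ENNReal.ofReal a⁻¹ * exponentialPDF a x := by
            rw [exponentialPDF_of_nonneg hx, ← ENNReal.ofReal_mul (by positivity)]
            rw [← mul_assoc, inv_mul_cancel₀ ha.ne', one_mul]
        _ ≤ _ := by gcongr; exact le_self_add
    · rw [abs_of_neg hx]
      calc ENNReal.ofReal (Real.exp (-(a * -x)))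
          = ENNReal.ofReal a⁻¹ * exponentialPDF a (-x) := by
            rw [exponentialPDF_of_nonneg (by linarith), ← ENNReal.ofReal_mul (by positivity)]
            rw [← mul_assoc, inv_mul_cancel₀ ha.ne', one_mul]
        _ ≤ _ := by gcongr; exact le_add_self
  have hpdf : Measurable (exponentialPDF a) :=
    (measurable_exponentialPDFReal a).ennreal_ofReal
  calc ∫⁻ x : ℝ, ENNReal.ofReal (Real.exp (-(a * |x|)))
      ≤ ∫⁻ x : ℝ, ENNReal.ofReal a⁻¹ * (exponentialPDF a x + exponentialPDF a (-x)) :=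
        lintegral_mono hpt
    _ = ENNReal.ofReal a⁻¹ * ((∫⁻ x, exponentialPDF a x) + ∫⁻ x, exponentialPDF a (-x)) := by
        rw [lintegral_const_mul _ (show
          Measurable fun x : ℝ => exponentialPDF a x + exponentialPDF a (-x) from hpdf.add (hpdf.comp measurable_neg)),
          lintegral_add_left hpdf]
    _ = ENNReal.ofReal a⁻¹ * (1 + 1) := by
        rw [lintegral_exponentialPDF_eq_one ha,
          (Measure.measurePreserving_neg volume).lintegral_comp hpdf,
          lintegral_exponentialPDF_eq_one ha]
    _ = ENNReal.ofReal (2 / a) := by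
        rw [one_add_one_eq_two, div_eq_mul_inv, ENNReal.ofReal_mul (by norm_num)]
        simp [mul_comm]

lemma lint_pi2' (g₁ g₂ : ℝ → ℝ≥0∞) (h₁ : Measurable g₁) (h₂ : Measurable g₂) :
    ∫⁻ y : Fin 2 → ℝ, g₁ (y 0) * g₂ (y 1) = (∫⁻ t, g₁ t) * ∫⁻ t, g₂ t := by
  have e := (volume_preserving_finTwoArrow ℝ).symm
  rw [← e.lintegral_comp (f := fun y : Fin 2 → ℝ => g₁ (y 0) * g₂ (y 1))
    (by exact ((h₁.comp (measurable_pi_apply 0)).mul (h₂.comp (measurable_pi_apply 1))))]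
  show ∫⁻ p : ℝ × ℝ, g₁ p.1 * g₂ p.2 = _
  rw [Measure.volume_eq_prod, lintegral_prod _ (by fun_prop)]
  simp_rw [lintegral_const_mul _ h₂, lintegral_mul_const _ h₁]

lemma lint_pi3' (g₀ g₁ g₂ : ℝ → ℝ≥0∞) (h₀ : Measurable g₀) (h₁ : Measurable g₁)
    (h₂ : Measurable g₂) :
    ∫⁻ y : Fin 3 → ℝ, g₀ (y 0) * g₁ (y 1) * g₂ (y 2)
      = (∫⁻ t, g₀ t) * (∫⁻ t, g₁ t) * ∫⁻ t, g₂ t := by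
  have e := (volume_preserving_piFinSuccAbove (fun _ : Fin 3 => ℝ) 0).symm
  rw [← e.lintegral_comp (f := fun y : Fin 3 → ℝ => g₀ (y 0) * g₁ (y 1) * g₂ (y 2))
    (by exact (((h₀.comp (measurable_pi_apply 0)).mul (h₁.comp (measurable_pi_apply 1))).mul
      (h₂.comp (measurable_pi_apply 2))))]
  show ∫⁻ p : ℝ × (Fin 2 → ℝ), g₀ p.1 * g₁ (p.2 0) * g₂ (p.2 1) = _
  rw [Measure.volume_eq_prod, lintegral_prod _ (by fun_prop)]
  simp_rw [mul_assoc, lintegral_const_mul _ (by fun_prop :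
      Measurable fun z : Fin 2 → ℝ => g₁ (z 0) * g₂ (z 1)),
    lintegral_mul_const _ h₀, lint_pi2' g₁ g₂ h₁ h₂]

/-- For a kernel `P ≥ 0` with `∫ P = 1` and
`P(Y) ≤ C₀ (T−S)^{−3/2} e^{−c₀|X₃−Y₃|/(T−S)}`, and `|f(Y)| ≤ C₁ (1+R_Y)^{−1}`,
one has `∫ P |f| ≤ C (T−S)^{−1/6}`. -/
theorem stmt18 (C₀ c₀ C₁ : ℝ) (h0 : 0 < C₀) (h1 : 0 < c₀) (h2 : 0 < C₁) :
    ∃ C : ℝ, 0 < C ∧ ∀ S T X₃ : ℝ, S < T → ∀ P f : E3 → ℝ,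
      Measurable P → Measurable f → (∀ Y, 0 ≤ P Y) →
      (∫⁻ Y : E3, ENNReal.ofReal (P Y)) = 1 →
      (∀ Y : E3, P Y ≤ C₀ * (T - S) ^ (-3/2 : ℝ) * Real.exp (-c₀ * |X₃ - Y 2| / (T - S))) →
      (∀ Y : E3, |f Y| ≤ C₁ * (1 + rr Y)⁻¹) →
      (∫⁻ Y : E3, ENNReal.ofReal (P Y * |f Y|))
        ≤ ENNReal.ofReal (C * (T - S) ^ (-1/6 : ℝ)) := by
  refine ⟨C₁ + 8 * C₁ * C₀ / c₀, by positivity, ?_⟩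
  intro S T X₃ hST P f hP hf hPpos hPint hPbd hfbd
  set τ : ℝ := T - S with hτdef
  have hτ : 0 < τ := sub_pos.mpr hST
  set r : ℝ := τ ^ (1/6 : ℝ) with hrdef
  have hr : 0 < r := Real.rpow_pos_of_pos hτ _
  set a : ℝ := c₀ / τ with hadef
  have ha : 0 < a := div_pos h1 hτ
  set K : ℝ := C₁ * (C₀ * τ ^ (-3/2 : ℝ)) with hKdef
  have hK : 0 < K := by positivity
  -- coordinate measurability
  have hc : ∀ i : Fin 3, Measurable fun Y : E3 => Y i := fun i =>
    (measurable_pi_apply i).comp (MeasurableEquiv.toLp 2 (Fin 3 → ℝ)).symm.measurable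
  set g₀ : ℝ → ℝ≥0∞ := (Icc (-r) r).indicator (fun _ => (1 : ℝ≥0∞)) with hg₀def
  set g₂ : ℝ → ℝ≥0∞ := fun t => ENNReal.ofReal (Real.exp (-(a * |X₃ - t|))) with hg₂def
  have hg₀ : Measurable g₀ := measurable_const.indicator measurableSet_Icc
  have hg₂ : Measurable g₂ := by fun_prop
  set G : E3 → ℝ≥0∞ := fun Y => ENNReal.ofReal K * (g₀ (Y 0) * g₀ (Y 1) * g₂ (Y 2)) with hGdef
  have hprod : Measurable fun Y : E3 => g₀ (Y 0) * g₀ (Y 1) * g₂ (Y 2) := by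
    exact ((hg₀.comp (hc 0)).mul (hg₀.comp (hc 1))).mul (hg₂.comp (hc 2))
  have hG : Measurable G := measurable_const.mul hprod
  -- pointwise bound
  have hpt : ∀ Y : E3, ENNReal.ofReal (P Y * |f Y|)
      ≤ ENNReal.ofReal (C₁ / (1 + r) * P Y) + G Y := by
    intro Y
    have hrrY : 0 ≤ rr Y := Real.sqrt_nonneg _
    by_cases h : rr Y ≤ r
    · -- inside the cylinder
      have habs0 : |Y 0| ≤ r := by
        have h1' : |Y 0| ≤ rr Y := by
          rw [rr, ← Real.sqrt_sq_eq_abs]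
          exact Real.sqrt_le_sqrt (by nlinarith [sq_nonneg (Y 1)])
        linarith
      have habs1 : |Y 1| ≤ r := by
        have h1' : |Y 1| ≤ rr Y := by
          rw [rr, ← Real.sqrt_sq_eq_abs]
          exact Real.sqrt_le_sqrt (by nlinarith [sq_nonneg (Y 0)])
        linarith
      have h00 : g₀ (Y 0) = 1 := by
        rw [hg₀def, indicator_of_mem]
        exact ⟨neg_le_of_abs_le habs0, le_of_abs_le habs0⟩
      have h01 : g₀ (Y 1) = 1 := by
        rw [hg₀def, indicator_of_mem]
        exact ⟨neg_le_of_abs_le habs1, le_of_abs_le habs1⟩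
      have hbd : P Y * |f Y| ≤ K * Real.exp (-(a * |X₃ - Y 2|)) := by
        have hfle : |f Y| ≤ C₁ := by
          have := hfbd Y
          have hinv : (1 + rr Y)⁻¹ ≤ 1 := by
            rw [inv_le_one_iff₀]; right; linarith
          nlinarith
        have hPle := hPbd Y
        have hexp : -c₀ * |X₃ - Y 2| / τ = -(a * |X₃ - Y 2|) := by
          rw [hadef]; field_simp
        rw [hexp] at hPle
        calc P Y * |f Y| ≤ (C₀ * τ ^ (-3/2 : ℝ) * Real.exp (-(a * |X₃ - Y 2|))) * C₁ := by
              apply mul_le_mul hPle hfle (abs_nonneg _)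
              positivity
          _ = K * Real.exp (-(a * |X₃ - Y 2|)) := by rw [hKdef]; ring
      have : ENNReal.ofReal (P Y * |f Y|) ≤ G Y := by
        rw [hGdef]
        simp only [h00, h01, one_mul]
        rw [hg₂def, ← ENNReal.ofReal_mul hK.le]
        exact ENNReal.ofReal_le_ofReal hbd
      exact this.trans (le_add_left le_rfl)
    · -- outside: use decay of f
      push_neg at h
      have hfle : |f Y| ≤ C₁ * (1 + r)⁻¹ := by
        have := hfbd Y
        have hinv : (1 + rr Y)⁻¹ ≤ (1 + r)⁻¹ := by
          apply inv_anti₀ (by linarith) (by linarith)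
        nlinarith [inv_nonneg.mpr (by linarith : (0:ℝ) ≤ 1 + rr Y)]
      have : P Y * |f Y| ≤ C₁ / (1 + r) * P Y := by
        rw [div_eq_mul_inv]
        calc P Y * |f Y| ≤ P Y * (C₁ * (1 + r)⁻¹) := by
              apply mul_le_mul_of_nonneg_left hfle (hPpos Y)
          _ = C₁ * (1 + r)⁻¹ * P Y := by ring
      exact le_trans (ENNReal.ofReal_le_ofReal this) le_self_add
  -- integrate
  have hfirst : (∫⁻ Y : E3, ENNReal.ofReal (C₁ / (1 + r) * P Y))
      = ENNReal.ofReal (C₁ / (1 + r)) := by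
    have h1r : (0:ℝ) ≤ C₁ / (1 + r) := by positivity
    simp_rw [ENNReal.ofReal_mul h1r]
    rw [lintegral_const_mul _ hP.ennreal_ofReal, hPint, mul_one]
  have htrans : (∫⁻ Y : E3, g₀ (Y 0) * g₀ (Y 1) * g₂ (Y 2))
      = ∫⁻ y : Fin 3 → ℝ, g₀ (y 0) * g₀ (y 1) * g₂ (y 2) := by
    exact (MeasurePreserving.lintegral_comp
      (MeasurePreserving.symm _ (EuclideanSpace.volume_preserving_symm_measurableEquiv_toLp (Fin 3)))
      hprod).symm
  have hg₀int : (∫⁻ t, g₀ t) = ENNReal.ofReal (2 * r) := by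
    rw [hg₀def, lintegral_indicator measurableSet_Icc, setLIntegral_one, Real.volume_Icc]
    congr 1; ring
  have hGint : (∫⁻ Y : E3, G Y) ≤ ENNReal.ofReal (K * (2 * r) * (2 * r) * (2 / a)) := by
    show (∫⁻ Y : E3, ENNReal.ofReal K * (g₀ (Y 0) * g₀ (Y 1) * g₂ (Y 2)))
      ≤ ENNReal.ofReal (K * (2 * r) * (2 * r) * (2 / a))
    rw [lintegral_const_mul _ hprod]
    rw [htrans, lint_pi3' g₀ g₀ g₂ hg₀ hg₀ hg₂, hg₀int]
    calc ENNReal.ofReal K * (ENNReal.ofReal (2*r) * ENNReal.ofReal (2*r) * ∫⁻ t, g₂ t)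
        ≤ ENNReal.ofReal K * (ENNReal.ofReal (2*r) * ENNReal.ofReal (2*r)
            * ENNReal.ofReal (2 / a)) := by
          gcongr
          exact lint_exp_abs' ha X₃
      _ = ENNReal.ofReal (K * (2 * r) * (2 * r) * (2 / a)) := by
          rw [← ENNReal.ofReal_mul (by positivity), ← ENNReal.ofReal_mul (by positivity),
            ← ENNReal.ofReal_mul hK.le]
          ring_nf
  -- final arithmetic
  have harith : C₁ / (1 + r) + K * (2 * r) * (2 * r) * (2 / a)
      ≤ (C₁ + 8 * C₁ * C₀ / c₀) * τ ^ (-1/6 : ℝ) := by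
    have hkey : τ ^ (-3/2 : ℝ) * r * r * τ = τ ^ (-1/6 : ℝ) := by
      rw [hrdef]
      rw [show τ ^ (-3/2:ℝ) * τ ^ (1/6:ℝ) * τ ^ (1/6:ℝ) * τ
          = τ ^ (-3/2:ℝ) * τ ^ (1/6:ℝ) * τ ^ (1/6:ℝ) * τ ^ (1:ℝ) by rw [Real.rpow_one]]
      rw [← Real.rpow_add hτ, ← Real.rpow_add hτ, ← Real.rpow_add hτ]
      norm_num
    have hrinv : r⁻¹ = τ ^ (-(1/6) : ℝ) := by
      rw [hrdef, ← Real.rpow_neg hτ.le]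
    have h2a : 2 / a = 2 * τ / c₀ := by
      rw [hadef]; field_simp
    have hterm2 : K * (2 * r) * (2 * r) * (2 / a) = (8 * C₁ * C₀ / c₀) * τ ^ (-1/6 : ℝ) := by
      rw [h2a, hKdef, ← hkey]; field_simp; ring
    have hterm1 : C₁ / (1 + r) ≤ C₁ * τ ^ (-1/6 : ℝ) := by
      have heq : τ ^ (-1/6 : ℝ) = r⁻¹ := by
        rw [show (-1/6 : ℝ) = -(1/6 : ℝ) by norm_num, Real.rpow_neg hτ.le, hrdef]
      rw [heq, ← div_eq_mul_inv]
      exact div_le_div_of_nonneg_left h2.le hr (by linarith)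
    rw [hterm2]
    nlinarith [Real.rpow_pos_of_pos hτ (-1/6 : ℝ)]
  calc (∫⁻ Y : E3, ENNReal.ofReal (P Y * |f Y|))
      ≤ ∫⁻ Y : E3, (ENNReal.ofReal (C₁ / (1 + r) * P Y) + G Y) := lintegral_mono hpt
    _ = (∫⁻ Y : E3, ENNReal.ofReal (C₁ / (1 + r) * P Y)) + ∫⁻ Y : E3, G Y :=
        lintegral_add_left ((hP.const_mul _).ennreal_ofReal) _
    _ ≤ ENNReal.ofReal (C₁ / (1 + r)) + ENNReal.ofReal (K * (2 * r) * (2 * r) * (2 / a)) := by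
        rw [hfirst]; gcongr
    _ = ENNReal.ofReal (C₁ / (1 + r) + K * (2 * r) * (2 * r) * (2 / a)) := by
        rw [ENNReal.ofReal_add (by positivity) (by positivity)]
    _ ≤ ENNReal.ofReal ((C₁ + 8 * C₁ * C₀ / c₀) * τ ^ (-1/6 : ℝ)) :=
        ENNReal.ofReal_le_ofReal harith
end
end

section
/- Let 0 < α < 1, M ≥ 1, c > 0, S < T, and X₃ ∈ ℝ. Then there is a constant C depending only on c and α such that ∫_S^T ∫_ℝ ∫_0^∞ (T−τ)^{−3/2} exp(−c |X₃ − Z| / (T−τ)) · R / (R^{3−α} M^α + 1) dR dZ dτ ≤ C (T−S)^{1/2} M^{−2α/3}. -/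
noncomputable section
open MeasureTheory Set


-- R-integral bound
lemma lemR {α : ℝ} (hα0 : 0 < α) (hα1 : α < 1) {M : ℝ} (hM : 1 ≤ M) :
    (∫⁻ R in Ioi (0:ℝ), ENNReal.ofReal (R / (R ^ (3 - α) * M ^ α + 1)))
      ≤ ENNReal.ofReal ((1 + 1/(1-α)) * M ^ (-2 * α / 3)) := by
  have hM0 : (0:ℝ) < M := lt_of_lt_of_le one_pos hM
  set R₀ : ℝ := M ^ (-α/3 : ℝ) with hR₀def
  have hR₀ : 0 < R₀ := Real.rpow_pos_of_pos hM0 _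
  have h1α : 0 < 1 - α := by linarith
  rw [← Ioc_union_Ioi_eq_Ioi hR₀.le,
    lintegral_union measurableSet_Ioi (Ioc_disjoint_Ioi le_rfl)]
  have partA : (∫⁻ R in Ioc (0:ℝ) R₀, ENNReal.ofReal (R / (R ^ (3 - α) * M ^ α + 1)))
      ≤ ENNReal.ofReal (M ^ (-2 * α / 3)) := by
    have h1 : (∫⁻ R in Ioc (0:ℝ) R₀, ENNReal.ofReal (R / (R ^ (3 - α) * M ^ α + 1)))
        ≤ ∫⁻ _ in Ioc (0:ℝ) R₀, ENNReal.ofReal R₀ := by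
      apply lintegral_mono_ae
      filter_upwards [ae_restrict_mem measurableSet_Ioc] with R hR
      apply ENNReal.ofReal_le_ofReal
      have hden : (1:ℝ) ≤ R ^ (3 - α) * M ^ α + 1 := by
        have : (0:ℝ) ≤ R ^ (3 - α) * M ^ α :=
          mul_nonneg (Real.rpow_nonneg hR.1.le _) (Real.rpow_nonneg hM0.le _)
        linarith
      exact (div_le_self hR.1.le hden).trans hR.2
    have h2 : (∫⁻ _ in Ioc (0:ℝ) R₀, ENNReal.ofReal R₀) = ENNReal.ofReal (M ^ (-2 * α / 3)) := by
      rw [setLIntegral_const, Real.volume_Ioc, sub_zero, ← ENNReal.ofReal_mul hR₀.le]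
      congr 1
      rw [hR₀def, ← Real.rpow_add hM0]
      norm_num
      ring_nf
    exact h1.trans_eq h2
  have partB : (∫⁻ R in Ioi R₀, ENNReal.ofReal (R / (R ^ (3 - α) * M ^ α + 1)))
      ≤ ENNReal.ofReal ((1/(1-α)) * M ^ (-2 * α / 3)) := by
    have h1 : (∫⁻ R in Ioi R₀, ENNReal.ofReal (R / (R ^ (3 - α) * M ^ α + 1)))
        ≤ ∫⁻ R in Ioi R₀, ENNReal.ofReal (M ^ (-α:ℝ) * R ^ (α - 2)) := by
      apply lintegral_mono_ae
      filter_upwards [ae_restrict_mem measurableSet_Ioi] with R hR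
      apply ENNReal.ofReal_le_ofReal
      have hRpos : 0 < R := hR₀.trans hR
      have hA : (0:ℝ) < R ^ (3 - α) * M ^ α := by positivity
      have key : M ^ (-α:ℝ) * R ^ (α - 2) = R / (R ^ (3 - α) * M ^ α) := by
        rw [Real.rpow_neg hM0.le, show (α - 2 : ℝ) = 1 - (3 - α) by ring,
          Real.rpow_sub hRpos, Real.rpow_one]
        field_simp
      rw [key]
      exact div_le_div_of_nonneg_left hRpos.le hA (by linarith)
    have h2 : (∫⁻ R in Ioi R₀, ENNReal.ofReal (M ^ (-α:ℝ) * R ^ (α - 2)))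
        = ENNReal.ofReal (M ^ (-α:ℝ) * (R₀ ^ (α - 1) / (1 - α))) := by
      have hint : IntegrableOn (fun t : ℝ => t ^ (α - 2)) (Ioi R₀) :=
        integrableOn_Ioi_rpow_of_lt (by linarith) hR₀
      have hnn : (0:ℝ → ℝ) ≤ᵐ[volume.restrict (Ioi R₀)] fun t : ℝ => t ^ (α - 2) := by
        filter_upwards [ae_restrict_mem measurableSet_Ioi] with t ht
        exact Real.rpow_nonneg (hR₀.trans ht).le _
      have hval : (∫ t in Ioi R₀, t ^ (α - 2)) = R₀ ^ (α - 1) / (1 - α) := by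
        rw [integral_Ioi_rpow_of_lt (by linarith) hR₀, show α - 2 + 1 = α - 1 by ring]
        have hne : α - 1 ≠ 0 := by linarith
        have hne' : (1:ℝ) - α ≠ 0 := by linarith
        field_simp
        ring
      simp_rw [ENNReal.ofReal_mul (Real.rpow_nonneg hM0.le _)]
      rw [lintegral_const_mul' _ _ ENNReal.ofReal_ne_top,
        ← ofReal_integral_eq_lintegral_ofReal hint hnn, hval,
        ← ENNReal.ofReal_mul (Real.rpow_nonneg hM0.le _)]
    refine h1.trans (h2.trans_le (ENNReal.ofReal_le_ofReal ?_))
    have hMR : M ^ (-α:ℝ) * R₀ ^ (α - 1) ≤ M ^ (-2 * α / 3) := by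
      rw [hR₀def, ← Real.rpow_mul hM0.le, ← Real.rpow_add hM0]
      exact Real.rpow_le_rpow_of_exponent_le hM (by nlinarith)
    calc M ^ (-α:ℝ) * (R₀ ^ (α - 1) / (1 - α))
        = (M ^ (-α:ℝ) * R₀ ^ (α - 1)) * (1/(1-α)) := by ring
      _ ≤ M ^ (-2 * α / 3) * (1/(1-α)) := by
          apply mul_le_mul_of_nonneg_right hMR (by positivity)
      _ = (1/(1-α)) * M ^ (-2 * α / 3) := by ring
  calc _ ≤ ENNReal.ofReal (M ^ (-2 * α / 3)) + ENNReal.ofReal ((1/(1-α)) * M ^ (-2 * α / 3)) :=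
        add_le_add partA partB
    _ = ENNReal.ofReal ((1 + 1/(1-α)) * M ^ (-2 * α / 3)) := by
        rw [← ENNReal.ofReal_add (by positivity) (by positivity)]
        ring_nf

lemma lemZ {b : ℝ} (hb : 0 < b) (x₀ : ℝ) :
    (∫⁻ Z : ℝ, ENNReal.ofReal (Real.exp (-b * |x₀ - Z|))) = ENNReal.ofReal (2 / b) := by
  have hmeas : Measurable fun z : ℝ => ENNReal.ofReal (Real.exp (-b * |z|)) := by
    measurability
  have h0 : (∫⁻ Z : ℝ, ENNReal.ofReal (Real.exp (-b * |x₀ - Z|)))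
      = ∫⁻ Z : ℝ, ENNReal.ofReal (Real.exp (-b * |Z|)) :=
    (Measure.measurePreserving_sub_left volume x₀).lintegral_comp hmeas
  rw [h0, ← lintegral_add_compl (fun Z : ℝ => ENNReal.ofReal (Real.exp (-b * |Z|)))
    (measurableSet_Iio (a := (0:ℝ))), compl_Iio]
  have hIoi : (∫⁻ Z in Ioi (0:ℝ), ENNReal.ofReal (Real.exp (-b * |Z|)))
      = ENNReal.ofReal (1 / b) := by
    have hcong : (∫⁻ Z in Ioi (0:ℝ), ENNReal.ofReal (Real.exp (-b * |Z|)))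
        = ∫⁻ Z in Ioi (0:ℝ), ENNReal.ofReal (Real.exp (-b * Z)) := by
      apply setLIntegral_congr_fun measurableSet_Ioi
      intro Z hZ
      beta_reduce
      rw [abs_of_pos hZ]
    have hint : IntegrableOn (fun x : ℝ => Real.exp (-b * x)) (Ioi 0) :=
      exp_neg_integrableOn_Ioi 0 hb
    have hnn : (0:ℝ → ℝ) ≤ᵐ[volume.restrict (Ioi 0)] fun x : ℝ => Real.exp (-b * x) := by
      filter_upwards with x using (Real.exp_pos _).le
    have hval : (∫ x in Ioi (0:ℝ), Real.exp (-b * x)) = 1 / b := by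
      have h := integral_exp_neg_mul_rpow zero_lt_one hb
      simp only [Real.rpow_one] at h
      rw [h]
      norm_num [Real.Gamma_two, Real.rpow_neg_one]
    rw [hcong, ← ofReal_integral_eq_lintegral_ofReal hint hnn, hval]
  have hIic : (∫⁻ Z in Iio (0:ℝ), ENNReal.ofReal (Real.exp (-b * |Z|)))
      = ENNReal.ofReal (1 / b) := by
    have hpre : (fun x : ℝ => -x) ⁻¹' Ioi (0:ℝ) = Iio 0 := by
      ext x; simp
    have := (Measure.measurePreserving_neg (volume : Measure ℝ)).setLIntegral_comp_preimage
      (measurableSet_Ioi (a := (0:ℝ))) hmeas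
    rw [hpre] at this
    simp only [abs_neg] at this
    rw [this, hIoi]
  rw [← Measure.restrict_congr_set (Ioi_ae_eq_Ici (a := (0:ℝ)))]
  rw [hIic, hIoi, ← ENNReal.ofReal_add (by positivity) (by positivity)]
  congr 1
  field_simp
  ring

lemma lemTau {S T : ℝ} (hST : S < T) :
    (∫⁻ τ in Ioo S T, ENNReal.ofReal ((T - τ) ^ (-1/2 : ℝ)))
      = ENNReal.ofReal (2 * (T - S) ^ (1/2 : ℝ)) := by
  have hmeas : Measurable fun u : ℝ => ENNReal.ofReal (u ^ (-1/2 : ℝ)) := by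
    measurability
  have hpre : (fun τ : ℝ => T - τ) ⁻¹' Ioo 0 (T - S) = Ioo S T := by
    ext τ; simp only [mem_preimage, mem_Ioo]; constructor <;> intro h <;>
      exact ⟨by linarith [h.1, h.2], by linarith [h.1, h.2]⟩
  have hcomp := (Measure.measurePreserving_sub_left volume T).setLIntegral_comp_preimage
    (measurableSet_Ioo (a := (0:ℝ)) (b := T - S)) hmeas
  rw [hpre] at hcomp
  rw [hcomp]
  set L : ℝ := T - S with hL
  have hL0 : 0 < L := sub_pos.mpr hST
  rw [Measure.restrict_congr_set Ioo_ae_eq_Ioc]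
  have hint : IntegrableOn (fun u : ℝ => u ^ (-1/2 : ℝ)) (Ioc 0 L) := by
    have := intervalIntegral.intervalIntegrable_rpow' (a := 0) (b := L)
      (r := (-1/2 : ℝ)) (by norm_num)
    rwa [intervalIntegrable_iff_integrableOn_Ioc_of_le hL0.le] at this
  have hnn : (0:ℝ → ℝ) ≤ᵐ[volume.restrict (Ioc 0 L)] fun u : ℝ => u ^ (-1/2 : ℝ) := by
    filter_upwards [ae_restrict_mem measurableSet_Ioc] with u hu
    exact Real.rpow_nonneg hu.1.le _
  rw [← ofReal_integral_eq_lintegral_ofReal hint hnn]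
  congr 1
  rw [← intervalIntegral.integral_of_le hL0.le,
    integral_rpow (Or.inl (by norm_num))]
  rw [show (-1/2 : ℝ) + 1 = 1/2 by norm_num, Real.zero_rpow (by norm_num : (1/2:ℝ) ≠ 0)]
  ring


/-- The cylindrical-coordinates integral bound
`∫_S^T ∫_ℝ ∫_0^∞ (T−τ)^{−3/2} e^{−c|X₃−Z|/(T−τ)} R/(R^{3−α}M^α+1) dR dZ dτ
  ≤ C (T−S)^{1/2} M^{−2α/3}`. -/
theorem stmt19 (α c : ℝ) (hα : α ∈ Ioo (0:ℝ) 1) (hc : 0 < c) :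
    ∃ C : ℝ, 0 < C ∧ ∀ M : ℝ, 1 ≤ M → ∀ S T X₃ : ℝ, S < T →
      (∫⁻ τ in Ioo S T, ∫⁻ Z : ℝ, ∫⁻ R in Ioi (0:ℝ),
          ENNReal.ofReal ((T - τ) ^ (-3/2 : ℝ) * Real.exp (-c * |X₃ - Z| / (T - τ))
            * (R / (R ^ (3 - α) * M ^ α + 1))))
        ≤ ENNReal.ofReal (C * (T - S) ^ (1/2 : ℝ) * M ^ (-2 * α / 3)) := by
  obtain ⟨hα0, hα1⟩ := hα
  have h1α : 0 < 1 - α := by linarith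
  set K : ℝ := 1 + 1/(1-α) with hKdef
  have hK : 0 < K := by positivity
  refine ⟨K * (2/c) * 2, by positivity, ?_⟩
  intro M hM S T X₃ hST
  have hM0 : (0:ℝ) < M := lt_of_lt_of_le one_pos hM
  have key : ∀ τ ∈ Ioo S T,
      (∫⁻ Z : ℝ, ∫⁻ R in Ioi (0:ℝ), ENNReal.ofReal ((T - τ) ^ (-3/2 : ℝ)
          * Real.exp (-c * |X₃ - Z| / (T - τ)) * (R / (R ^ (3 - α) * M ^ α + 1))))
        ≤ ENNReal.ofReal (K * M ^ (-2 * α / 3) * (2/c) * (T - τ) ^ (-1/2 : ℝ)) := by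
    intro τ hτ
    have ht : 0 < T - τ := sub_pos.mpr hτ.2
    set t := T - τ with htdef
    have hstep1 : ∀ Z : ℝ,
        (∫⁻ R in Ioi (0:ℝ), ENNReal.ofReal (t ^ (-3/2 : ℝ)
            * Real.exp (-c * |X₃ - Z| / t) * (R / (R ^ (3 - α) * M ^ α + 1))))
          ≤ ENNReal.ofReal (t ^ (-3/2 : ℝ) * Real.exp (-c * |X₃ - Z| / t))
            * ENNReal.ofReal (K * M ^ (-2 * α / 3)) := by
      intro Z
      have ha : 0 ≤ t ^ (-3/2 : ℝ) * Real.exp (-c * |X₃ - Z| / t) := by positivity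
      have heq : (∫⁻ R in Ioi (0:ℝ), ENNReal.ofReal (t ^ (-3/2 : ℝ)
            * Real.exp (-c * |X₃ - Z| / t) * (R / (R ^ (3 - α) * M ^ α + 1))))
          = ENNReal.ofReal (t ^ (-3/2 : ℝ) * Real.exp (-c * |X₃ - Z| / t))
            * ∫⁻ R in Ioi (0:ℝ), ENNReal.ofReal (R / (R ^ (3 - α) * M ^ α + 1)) := by
        simp_rw [ENNReal.ofReal_mul ha]
        exact lintegral_const_mul' _ _ ENNReal.ofReal_ne_top
      rw [heq]
      exact mul_le_mul_right (lemR hα0 hα1 hM) _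
    have hb : 0 < c / t := div_pos hc ht
    have hZint : (∫⁻ Z : ℝ, ENNReal.ofReal (t ^ (-3/2 : ℝ) * Real.exp (-c * |X₃ - Z| / t)))
        = ENNReal.ofReal (t ^ (-3/2 : ℝ)) * ENNReal.ofReal (2 / (c / t)) := by
      simp_rw [ENNReal.ofReal_mul (Real.rpow_nonneg ht.le _)]
      rw [lintegral_const_mul' _ _ ENNReal.ofReal_ne_top]
      congr 1
      rw [show (fun Z : ℝ => ENNReal.ofReal (Real.exp (-c * |X₃ - Z| / t)))
          = fun Z : ℝ => ENNReal.ofReal (Real.exp (-(c/t) * |X₃ - Z|)) by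
        funext Z; congr 1; ring_nf]
      exact lemZ hb X₃
    calc (∫⁻ Z : ℝ, ∫⁻ R in Ioi (0:ℝ), ENNReal.ofReal (t ^ (-3/2 : ℝ)
            * Real.exp (-c * |X₃ - Z| / t) * (R / (R ^ (3 - α) * M ^ α + 1))))
        ≤ ∫⁻ Z : ℝ, ENNReal.ofReal (t ^ (-3/2 : ℝ) * Real.exp (-c * |X₃ - Z| / t))
            * ENNReal.ofReal (K * M ^ (-2 * α / 3)) := lintegral_mono hstep1
      _ = (∫⁻ Z : ℝ, ENNReal.ofReal (t ^ (-3/2 : ℝ) * Real.exp (-c * |X₃ - Z| / t)))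
            * ENNReal.ofReal (K * M ^ (-2 * α / 3)) :=
          lintegral_mul_const' _ _ ENNReal.ofReal_ne_top
      _ = ENNReal.ofReal (t ^ (-3/2 : ℝ)) * ENNReal.ofReal (2 / (c / t))
            * ENNReal.ofReal (K * M ^ (-2 * α / 3)) := by rw [hZint]
      _ = ENNReal.ofReal (K * M ^ (-2 * α / 3) * (2/c) * t ^ (-1/2 : ℝ)) := by
          rw [← ENNReal.ofReal_mul (Real.rpow_nonneg ht.le _),
            ← ENNReal.ofReal_mul (by positivity)]
          congr 1
          have hts : t ^ (-1/2 : ℝ) = t ^ (-3/2 : ℝ) * t := by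
            rw [show (-1/2 : ℝ) = -3/2 + 1 by norm_num, Real.rpow_add ht, Real.rpow_one]
          rw [hts]
          rw [div_div_eq_mul_div]
          field_simp
  calc (∫⁻ τ in Ioo S T, ∫⁻ Z : ℝ, ∫⁻ R in Ioi (0:ℝ),
          ENNReal.ofReal ((T - τ) ^ (-3/2 : ℝ) * Real.exp (-c * |X₃ - Z| / (T - τ))
            * (R / (R ^ (3 - α) * M ^ α + 1))))
      ≤ ∫⁻ τ in Ioo S T, ENNReal.ofReal (K * M ^ (-2 * α / 3) * (2/c))
          * ENNReal.ofReal ((T - τ) ^ (-1/2 : ℝ)) := by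
        refine lintegral_mono_ae ?_
        filter_upwards [ae_restrict_mem measurableSet_Ioo] with τ hτ
        refine (key τ hτ).trans_eq ?_
        rw [← ENNReal.ofReal_mul (by positivity)]
    _ = ENNReal.ofReal (K * M ^ (-2 * α / 3) * (2/c))
          * ∫⁻ τ in Ioo S T, ENNReal.ofReal ((T - τ) ^ (-1/2 : ℝ)) :=
        lintegral_const_mul' _ _ ENNReal.ofReal_ne_top
    _ = ENNReal.ofReal (K * M ^ (-2 * α / 3) * (2/c)) * ENNReal.ofReal (2 * (T - S) ^ (1/2 : ℝ)) := by
        rw [lemTau hST]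
    _ = ENNReal.ofReal (K * (2/c) * 2 * (T - S) ^ (1/2 : ℝ) * M ^ (-2 * α / 3)) := by
        rw [← ENNReal.ofReal_mul (by positivity)]
        congr 1
        ring
end
end
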